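/- For integers r ≥ 2 and 1 ≤ i < r, the set U_{i,r} of partitions λ = (λ_1, ..., λ_ℓ) into positive parts satisfying λ_j - λ_{j+r-1} ≥ 2 for all j, with λ_j - λ_{j+r-2} ≤ 1 only if λ_j + λ_{j+1} + ... + λ_{j+r-2} ≡ i-1 (mod 2), and having at most i-1 parts equal to 1, coincides with the set of partitions whose multiplicity sequence (f_u)_{u≥0} satisfies: f_0 = 0, f_1 ≤ i-1, f_u + f_{u+1} ≤ r-1 for all u ≥ 1, and whenever f_u + f_{u+1} = r-1 for u ≥ 1, one has u·f_u + (u+1)·f_{u+1} ≡ i-1 (mod 2). -/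

import Mathlib

def cntGE (L : List ℕ) (v : ℕ) : ℕ := L.countP (fun x => v ≤ x)

lemma cntGE_le_length (L : List ℕ) (v : ℕ) : cntGE L v ≤ L.length :=
  List.countP_le_length

lemma cntGE_eq (L : List ℕ) (v : ℕ) : cntGE L v = L.count v + cntGE L (v+1) := by
  induction L with
  | nil => simp [cntGE]
  | cons a l ih =>
    simp only [cntGE, List.countP_cons, List.count_cons, decide_eq_true_eq, beq_iff_eq] at *
    split_ifs <;> omega

lemma sorted_get_iff (L : List ℕ) (hL : List.Pairwise (· ≥ ·) L) (v : ℕ) (j : ℕ)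
    (hj : j < L.length) : v ≤ L.get ⟨j, hj⟩ ↔ j < cntGE L v := by
  induction L generalizing j with
  | nil => simp at hj
  | cons a l ih =>
    obtain ⟨ha, hs⟩ := List.pairwise_cons.mp hL
    cases j with
    | zero =>
      simp only [List.get, cntGE, List.countP_cons, decide_eq_true_eq]
      constructor
      · intro h; split_ifs <;> omega
      · intro h
        by_cases hva : v ≤ a
        · exact hva
        · simp only [hva, if_false, Nat.add_zero] at h
          obtain ⟨x, hx, hvx⟩ := List.countP_pos_iff.mp h
          simp only [decide_eq_true_eq] at hvx
          exact le_trans hvx (ha x hx)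
    | succ j =>
      have hj' : j < l.length := by simpa using hj
      simp only [List.get, cntGE, List.countP_cons, decide_eq_true_eq]
      by_cases hva : v ≤ a
      · simp only [hva, if_true]
        rw [show (l.get ⟨j, hj'⟩ = l.get ⟨j, hj'⟩) from rfl]
        have := ih hs j hj'
        simp only [cntGE] at this
        rw [this]; omega
      · have h0 : l.countP (fun x => decide (v ≤ x)) = 0 := by
          rw [List.countP_eq_zero]
          intro x hx
          simp only [decide_eq_true_eq]
          intro hvx
          exact hva (le_trans hvx (ha x hx))
        simp only [hva, if_false, h0]
        constructor
        · intro h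
          exact absurd (le_trans h (ha _ (List.get_mem l ⟨j, hj'⟩))) hva
        · omega

lemma sum_of_two (W : List ℕ) (u : ℕ) (h : ∀ x ∈ W, x = u ∨ x = u+1) :
    W.sum = u * W.count u + (u+1) * W.count (u+1) := by
  induction W with
  | nil => simp
  | cons a l ih =>
    have hl := ih (fun x hx => h x (List.mem_cons_of_mem _ hx))
    have hne : u ≠ u + 1 := by omega
    rcases h a List.mem_cons_self with h' | h'
    all_goals rw [h']
    · rw [List.sum_cons, hl, List.count_cons_self,
        List.count_cons_of_ne hne]
      ring
    · rw [List.sum_cons, hl, List.count_cons_self, List.count_cons_of_ne (show u + 1 ≠ u by omega)]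
      ring

/-- master window lemma -/
lemma window_sum (L : List ℕ) (hL : List.Pairwise (· ≥ ·) L) (u k r' : ℕ)
    (h2 : cntGE L (u+2) = k) (h0 : cntGE L u = k + r') :
    ((L.drop k).take r').sum = u * L.count u + (u+1) * L.count (u+1) := by
  have hlen : k + r' ≤ L.length := h0 ▸ cntGE_le_length L u
  have hWlen : ((L.drop k).take r').length = r' := by
    simp [List.length_take, List.length_drop]; omega
  have hmem : ∀ x ∈ (L.drop k).take r', x = u ∨ x = u + 1 := by
    intro x hx
    obtain ⟨j, hjlt, hjx⟩ := List.mem_iff_getElem.mp hx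
    have hj : j < r' := hWlen ▸ hjlt
    have hidx : k + j < L.length := by omega
    simp only [List.getElem_take, List.getElem_drop] at hjx
    have hlow : u ≤ L.get ⟨k+j, hidx⟩ :=
      (sorted_get_iff L hL u (k+j) hidx).mpr (by omega)
    have hhigh : ¬ (u + 2 ≤ L.get ⟨k+j, hidx⟩) := by
      rw [sorted_get_iff L hL (u+2) (k+j) hidx]; omega
    simp only [List.get_eq_getElem] at hlow hhigh
    omega
  have hdecomp : L = L.take k ++ (L.drop k).take r' ++ L.drop (k + r') := by
    conv_lhs => rw [← List.take_append_drop k L]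
    rw [List.append_assoc]
    congr 1
    conv_lhs => rw [← List.take_append_drop r' (L.drop k)]
    rw [List.drop_drop]
  have hcount : ∀ w : ℕ, u ≤ w → w ≤ u + 1 →
      L.count w = ((L.drop k).take r').count w := by
    intro w hw1 hw2
    have hpre : (L.take k).count w = 0 := by
      rw [List.count_eq_zero]
      intro hmem'
      obtain ⟨j, hjlt, hjx⟩ := List.mem_iff_getElem.mp hmem'
      have hjk : j < k := by simp [List.length_take] at hjlt; omega
      have hjL : j < L.length := by omega
      have hbig : u + 2 ≤ L.get ⟨j, hjL⟩ :=
        (sorted_get_iff L hL (u+2) j hjL).mpr (by omega)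
      simp only [List.getElem_take] at hjx
      simp only [List.get_eq_getElem] at hbig
      omega
    have hpost : (L.drop (k + r')).count w = 0 := by
      rw [List.count_eq_zero]
      intro hmem'
      obtain ⟨j, hjlt, hjx⟩ := List.mem_iff_getElem.mp hmem'
      have hjL : k + r' + j < L.length := by
        simp [List.length_drop] at hjlt; omega
      have hsmall : ¬ (u ≤ L.get ⟨k + r' + j, hjL⟩) := by
        rw [sorted_get_iff L hL u _ hjL]; omega
      simp only [List.getElem_drop] at hjx
      simp only [List.get_eq_getElem] at hsmall
      omega
    conv_lhs => rw [hdecomp]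
    rw [List.count_append, List.count_append, hpre, hpost]
    omega
  rw [sum_of_two _ u hmem, ← hcount u le_rfl (by omega), ← hcount (u+1) (by omega) le_rfl]


/-- the set `U_{i,r}` of partitions into positive parts with
`λ_j - λ_{j+r-1} ≥ 2`, the Bressoud parity condition, and at most `i-1` parts equal to 1,
coincides with the corresponding set described via multiplicity sequences. -/
theorem stmt_3 (r i : ℕ) (hr : 2 ≤ r) (hi1 : 1 ≤ i) (hir : i < r) (L : List ℕ)
    (hL : List.Pairwise (· ≥ ·) L) :
    ((∀ x ∈ L, 0 < x) ∧
      (∀ (k : ℕ) (h : k + (r - 1) < L.length),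
        L.get ⟨k + (r - 1), h⟩ + 2 ≤ L.get ⟨k, by omega⟩) ∧
      (∀ (k : ℕ) (h : k + (r - 2) < L.length),
        L.get ⟨k, by omega⟩ ≤ L.get ⟨k + (r - 2), h⟩ + 1 →
          (((L.drop k).take (r - 1)).sum) % 2 = (i - 1) % 2) ∧
      L.count 1 ≤ i - 1) ↔
    (L.count 0 = 0 ∧ L.count 1 ≤ i - 1 ∧
      (∀ u : ℕ, 1 ≤ u → L.count u + L.count (u + 1) ≤ r - 1) ∧
      ∀ u : ℕ, 1 ≤ u → L.count u + L.count (u + 1) = r - 1 →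
        (u * L.count u + (u + 1) * L.count (u + 1)) % 2 = (i - 1) % 2) := by
  constructor
  · rintro ⟨hpos, hgap, hpar, h1⟩
    have hc0 : L.count 0 = 0 := by
      rw [List.count_eq_zero]; intro h0; exact absurd (hpos 0 h0) (lt_irrefl 0)
    have hbound : ∀ u : ℕ, 1 ≤ u → L.count u + L.count (u+1) ≤ r - 1 := by
      intro u hu
      by_contra hcon
      push_neg at hcon
      have hce1 := cntGE_eq L u
      have hce2 := cntGE_eq L (u+1)
      have hEq : cntGE L (u+1+1) = cntGE L (u+2) := rfl
      have hklen : cntGE L (u+2) + (r-1) < cntGE L u := by omega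
      have hlen : cntGE L (u+2) + (r-1) < L.length :=
        lt_of_lt_of_le hklen (cntGE_le_length L u)
      have hg := hgap (cntGE L (u+2)) hlen
      have hup : ¬ (u + 2 ≤ L.get ⟨cntGE L (u+2), by omega⟩) := by
        rw [sorted_get_iff L hL]; omega
      have hlow : u ≤ L.get ⟨cntGE L (u+2) + (r-1), hlen⟩ :=
        (sorted_get_iff L hL u _ hlen).mpr (by omega)
      omega
    refine ⟨hc0, h1, hbound, ?_⟩
    intro u hu hequ
    have hce1 := cntGE_eq L u
    have hce2 := cntGE_eq L (u+1)
    have hEq : cntGE L (u+1+1) = cntGE L (u+2) := rfl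
    have hcu : cntGE L u = cntGE L (u+2) + (r-1) := by omega
    have hlenL : cntGE L (u+2) + (r-1) ≤ L.length := hcu ▸ cntGE_le_length L u
    have hkl : cntGE L (u+2) + (r-2) < L.length := by omega
    have hupk : ¬ (u + 2 ≤ L.get ⟨cntGE L (u+2), by omega⟩) := by
      rw [sorted_get_iff L hL]; omega
    have hlowk : u ≤ L.get ⟨cntGE L (u+2) + (r-2), hkl⟩ :=
      (sorted_get_iff L hL u _ hkl).mpr (by omega)
    have hsum := hpar (cntGE L (u+2)) hkl (by omega)
    rwa [window_sum L hL u (cntGE L (u+2)) (r-1) rfl hcu] at hsum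
  · rintro ⟨hc0, h1, hbound, hparm⟩
    have hpos : ∀ x ∈ L, 0 < x := by
      intro x hx
      rcases Nat.eq_zero_or_pos x with rfl | h
      · have := List.count_pos_iff.mpr hx; omega
      · exact h
    refine ⟨hpos, ?_, ?_, h1⟩
    · intro k h
      by_contra hcon
      push_neg at hcon
      have hu1 : 1 ≤ L.get ⟨k + (r-1), h⟩ := hpos _ (List.get_mem _ _)
      have hlow : k + (r-1) < cntGE L (L.get ⟨k + (r-1), h⟩) :=
        (sorted_get_iff L hL _ _ h).mp le_rfl
      have hup : cntGE L (L.get ⟨k + (r-1), h⟩ + 2) ≤ k := by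
        by_contra hc
        have h2 := (sorted_get_iff L hL (L.get ⟨k + (r-1), h⟩ + 2) k
          (by omega)).mpr (by omega)
        omega
      have hbu := hbound _ hu1
      have hce1 := cntGE_eq L (L.get ⟨k + (r-1), h⟩)
      have hce2 := cntGE_eq L (L.get ⟨k + (r-1), h⟩ + 1)
      have hEq : cntGE L (L.get ⟨k + (r-1), h⟩ + 1 + 1)
          = cntGE L (L.get ⟨k + (r-1), h⟩ + 2) := rfl
      omega
    · intro k h hnear
      have hu1 : 1 ≤ L.get ⟨k + (r-2), h⟩ := hpos _ (List.get_mem _ _)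
      have hlow : k + (r-2) < cntGE L (L.get ⟨k + (r-2), h⟩) :=
        (sorted_get_iff L hL _ _ h).mp le_rfl
      have hup : cntGE L (L.get ⟨k + (r-2), h⟩ + 2) ≤ k := by
        by_contra hc
        have h2 := (sorted_get_iff L hL (L.get ⟨k + (r-2), h⟩ + 2) k
          (by omega)).mpr (by omega)
        omega
      have hbu := hbound _ hu1
      have hce1 := cntGE_eq L (L.get ⟨k + (r-2), h⟩)
      have hce2 := cntGE_eq L (L.get ⟨k + (r-2), h⟩ + 1)
      have hEq : cntGE L (L.get ⟨k + (r-2), h⟩ + 1 + 1)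
          = cntGE L (L.get ⟨k + (r-2), h⟩ + 2) := rfl
      have hk2 : cntGE L (L.get ⟨k + (r-2), h⟩ + 2) = k := by omega
      have hcu : cntGE L (L.get ⟨k + (r-2), h⟩) = k + (r-1) := by omega
      rw [window_sum L hL _ k (r-1) hk2 hcu]
      exact hparm _ hu1 (by omega)
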